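/- With the same notation, if f has infinite support then ‖f‖₁ = ∑_{i=1}^∞ (p(f,i) − p(f,i+1))·|G(f,i)|. -/

import Mathlib

open scoped Classical
open Filter Finset Topology

theorem stmt_11 {X : Type*} [NormedAddCommGroup X] [NormedSpace ℝ X] [CompleteSpace X]
    {Γ : Type*} (e : Γ → X) (es : Γ → X →L[ℝ] ℝ)
    (hbi : ∀ α β : Γ, es α (e β) = if α = β then 1 else 0)
    (hnorm : ∀ γ, ‖e γ‖ = 1)
    (f : X →L[ℝ] ℝ) (hsum : Summable fun γ => |f (e γ)|)
    (hinf : {γ | f (e γ) ≠ 0}.Infinite)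
    (p : ℕ → ℝ) (G : ℕ → Finset Γ)
    (hp1 : IsGreatest (Set.range fun γ => |f (e γ)|) (p 1))
    (hG : ∀ n, 1 ≤ n → (G n : Set Γ) = {γ | p n ≤ |f (e γ)|})
    (hpsucc : ∀ n, 1 ≤ n →
      IsGreatest ((fun γ => |f (e γ)|) '' (↑(G n) : Set Γ)ᶜ) (p (n + 1))) :
    HasSum (fun i : ℕ => (p (i + 1) - p (i + 2)) * ((G (i + 1)).card : ℝ))
      (∑' γ, |f (e γ)|) := by
  set g : Γ → ℝ := fun γ => |f (e γ)| with hgdef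
  have hg0 : ∀ γ, 0 ≤ g γ := fun γ => abs_nonneg _
  have hsumg : Summable g := hsum
  set S : ℝ := ∑' γ, g γ with hSdef
  have hgS : Tendsto (fun F : Finset Γ => ∑ γ ∈ F, g γ) atTop (𝓝 S) := hsumg.hasSum
  -- membership in G
  have memG : ∀ n γ, γ ∈ G (n+1) ↔ p (n+1) ≤ g γ := by
    intro n γ
    have h := hG (n+1) (by omega)
    constructor
    · intro hγ
      have h2 : γ ∈ (↑(G (n+1)) : Set Γ) := hγ
      rw [h] at h2; exact h2
    · intro hγ
      have h2 : γ ∈ ({γ | p (n+1) ≤ |f (e γ)|} : Set Γ) := hγ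
      rw [← h] at h2; exact h2
  have hub1 : ∀ γ, g γ ≤ p 1 := fun γ => hp1.2 ⟨γ, rfl⟩
  have hattain1 : ∃ γ, g γ = p 1 := hp1.1
  have hub2 : ∀ n γ, γ ∉ G (n+1) → g γ ≤ p (n+2) := by
    intro n γ hγ
    exact (hpsucc (n+1) (by omega)).2 ⟨γ, by simpa using hγ, rfl⟩
  have hattain2 : ∀ n, ∃ γ, γ ∉ G (n+1) ∧ g γ = p (n+2) := by
    intro n
    obtain ⟨γ, hγ, hv⟩ := (hpsucc (n+1) (by omega)).1
    exact ⟨γ, by simpa using hγ, hv⟩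
  have hdec : ∀ n, p (n+2) < p (n+1) := by
    intro n
    obtain ⟨γ, hγ, hv⟩ := hattain2 n
    have h2 : ¬ (p (n+1) ≤ g γ) := fun h => hγ ((memG n γ).mpr h)
    rw [← hv]
    exact lt_of_not_ge h2
  have pmono : ∀ m n : ℕ, m ≤ n → p (n+1) ≤ p (m+1) := by
    have h := antitone_nat_of_succ_le (f := fun n => p (n+1)) (fun n => (hdec n).le)
    exact fun m n hmn => h hmn
  have hpos : ∀ n, 0 < p (n+1) := by
    intro n
    cases n with
    | zero =>
      obtain ⟨γ0, hγ0⟩ := hinf.nonempty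
      exact lt_of_lt_of_le (abs_pos.mpr hγ0) (hub1 γ0)
    | succ m =>
      obtain ⟨γ, hγs, hγ⟩ := hinf.exists_notMem_finset (G (m+1))
      exact lt_of_lt_of_le (abs_pos.mpr hγs) (hub2 m γ hγ)
  have GmonoSucc : ∀ n, G (n+1) ⊆ G (n+2) := by
    intro n γ hγ
    exact (memG (n+1) γ).mpr (le_trans (hdec n).le ((memG n γ).mp hγ))
  have Gmono : ∀ m n : ℕ, m ≤ n → G (m+1) ⊆ G (n+1) := by
    have h := monotone_nat_of_le_succ (f := fun n => G (n+1)) (fun n => GmonoSucc n)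
    exact fun m n hmn => h hmn
  have hcard : ∀ n : ℕ, n + 1 ≤ (G (n+1)).card := by
    intro n
    induction n with
    | zero =>
      obtain ⟨γ, hγ⟩ := hattain1
      exact Finset.card_pos.mpr ⟨γ, (memG 0 γ).mpr hγ.ge⟩
    | succ m ih =>
      obtain ⟨γ, hγn, hγv⟩ := hattain2 m
      have hss : G (m+1) ⊂ G (m+2) :=
        ⟨GmonoSucc m, fun h => hγn (h ((memG (m+1) γ).mpr hγv.ge))⟩
      have h9 := Finset.card_lt_card hss
      show m + 2 ≤ (G (m+2)).card
      omega
  set A : ℕ → ℝ := fun n => ∑ γ ∈ G (n+1), g γ with hAdef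
  have hAle : ∀ n, A n ≤ S := fun n => Summable.sum_le_tsum _ (fun γ _ => hg0 γ) hsumg
  have hAmono : ∀ m n : ℕ, m ≤ n → A m ≤ A n := fun m n hmn =>
    Finset.sum_le_sum_of_subset_of_nonneg (Gmono m n hmn) (fun γ _ _ => hg0 γ)
  -- p tends to 0
  have hp0 : Tendsto (fun n : ℕ => p (n+1)) atTop (𝓝 0) := by
    have hb : ∀ n : ℕ, p (n+1) ≤ S / (n+1) := by
      intro n
      have h1 : (G (n+1)).card • p (n+1) ≤ A n :=
        Finset.card_nsmul_le_sum _ _ _ (fun γ hγ => (memG n γ).mp hγ)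
      rw [nsmul_eq_mul] at h1
      have h2 : ((n+1 : ℕ) : ℝ) * p (n+1) ≤ ((G (n+1)).card : ℝ) * p (n+1) :=
        mul_le_mul_of_nonneg_right (by exact_mod_cast hcard n) (hpos n).le
      rw [le_div_iff₀ (by positivity)]
      have h3 := hAle n
      push_cast at h2 ⊢
      nlinarith
    have hdiv : Tendsto (fun n : ℕ => S / (n+1 : ℝ)) atTop (𝓝 0) := by
      have := tendsto_one_div_add_atTop_nhds_zero_nat.const_mul S
      simpa [div_eq_mul_inv, mul_comm] using this
    exact squeeze_zero (fun n => (hpos n).le) hb hdiv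
  -- A tends to S
  have hAtend : Tendsto A atTop (𝓝 S) := by
    rw [Metric.tendsto_atTop]
    intro ε hε
    have h1 : ∀ᶠ F : Finset Γ in atTop, S - ε < ∑ γ ∈ F, g γ :=
      hgS.eventually (eventually_gt_nhds (by linarith))
    obtain ⟨F0, hF0⟩ := h1.exists
    set F1 := F0.filter (fun γ => g γ ≠ 0) with hF1def
    have hsumF : ∑ γ ∈ F1, g γ = ∑ γ ∈ F0, g γ := Finset.sum_filter_ne_zero F0
    have hev : ∀ᶠ n in atTop, ∀ γ ∈ F1, γ ∈ G (n+1) := by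
      rw [eventually_all_finset]
      intro γ hγ
      have hgne : g γ ≠ 0 := (Finset.mem_filter.mp hγ).2
      have hgpos : 0 < g γ := (hg0 γ).lt_of_ne' hgne
      have h3 := hp0.eventually (eventually_lt_nhds hgpos)
      exact h3.mono fun n hn => (memG n γ).mpr hn.le
    obtain ⟨N, hN⟩ := eventually_atTop.mp hev
    refine ⟨N, fun n hn => ?_⟩
    have hsub : F1 ⊆ G (n+1) := fun γ hγ => hN n hn γ hγ
    have h4 : S - ε < A n :=
      lt_of_lt_of_le (hsumF ▸ hF0)
        (Finset.sum_le_sum_of_subset_of_nonneg hsub (fun γ _ _ => hg0 γ))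
    have h5 := hAle n
    rw [Real.dist_eq, abs_sub_comm, abs_of_nonneg (by linarith)]
    linarith
  -- p (n+2) * card (G (n+1)) tends to 0
  have hB : Tendsto (fun n : ℕ => p (n+2) * ((G (n+1)).card : ℝ)) atTop (𝓝 0) := by
    rw [Metric.tendsto_atTop]
    intro ε hε
    obtain ⟨N0, hN0⟩ : ∃ N0 : ℕ, S - A N0 < ε/2 := by
      obtain ⟨N0, h⟩ := (hAtend.eventually (eventually_gt_nhds
        (show S - ε/2 < S by linarith))).exists
      exact ⟨N0, by linarith⟩
    set c : ℝ := ((G (N0+1)).card : ℝ) with hcdef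
    have h2 : ∀ᶠ n : ℕ in atTop, p (n+2) * c < ε/2 := by
      have hmul : Tendsto (fun n : ℕ => p (n+2) * c) atTop (𝓝 0) := by
        have h3 : Tendsto (fun n : ℕ => p (n+2)) atTop (𝓝 0) := by
          have := hp0.comp (tendsto_add_atTop_nat 1)
          simpa [Function.comp_def, add_assoc] using this
        simpa using h3.mul_const c
      exact hmul.eventually (eventually_lt_nhds (by linarith))
    obtain ⟨N1, hN1⟩ := eventually_atTop.mp h2
    refine ⟨max N0 N1, fun n hn => ?_⟩
    have hnN0 : N0 ≤ n := le_trans (le_max_left _ _) hn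
    have hnN1 : N1 ≤ n := le_trans (le_max_right _ _) hn
    have hsub : G (N0+1) ⊆ G (n+1) := Gmono N0 n hnN0
    have hsd : ∑ γ ∈ G (n+1) \ G (N0+1), g γ = A n - A N0 :=
      Finset.sum_sdiff_eq_sub hsub
    have h6 : (G (n+1) \ G (N0+1)).card • p (n+2) ≤ ∑ γ ∈ G (n+1) \ G (N0+1), g γ := by
      apply Finset.card_nsmul_le_sum
      intro γ hγ
      exact le_trans (hdec n).le ((memG n γ).mp (Finset.mem_sdiff.mp hγ).1)
    rw [nsmul_eq_mul] at h6
    have hcast : ((G (n+1) \ G (N0+1)).card : ℝ) = ((G (n+1)).card : ℝ) - c := by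
      rw [Finset.card_sdiff_of_subset hsub, Nat.cast_sub (Finset.card_le_card hsub)]
    rw [hcast] at h6
    have h7 : p (n+2) * c < ε/2 := hN1 n hnN1
    have h8 : A n ≤ S := hAle n
    have h9 : A N0 ≤ A n := hAmono N0 n hnN0
    have h10 : 0 ≤ p (n+2) * ((G (n+1)).card : ℝ) :=
      mul_nonneg (hpos (n+1)).le (Nat.cast_nonneg _)
    rw [Real.dist_eq, sub_zero, abs_of_nonneg h10]
    nlinarith
  -- partial sums identity
  have hP : ∀ N : ℕ, ∑ i ∈ Finset.range (N+1), (p (i+1) - p (i+2)) * ((G (i+1)).card : ℝ)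
      = A N - p (N+2) * ((G (N+1)).card : ℝ) := by
    intro N
    induction N with
    | zero =>
      have hval : ∀ γ ∈ G 1, g γ = p 1 :=
        fun γ hγ => le_antisymm (hub1 γ) ((memG 0 γ).mp hγ)
      have hA0 : A 0 = ((G 1).card : ℝ) * p 1 := by
        have : A 0 = ∑ γ ∈ G 1, p 1 := Finset.sum_congr rfl hval
        rw [this, Finset.sum_const, nsmul_eq_mul]
      rw [Finset.sum_range_one, hA0]
      ring
    | succ N ih =>
      have hsub := GmonoSucc N
      have hval : ∀ γ ∈ G (N+2) \ G (N+1), g γ = p (N+2) := fun γ hγ =>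
        le_antisymm (hub2 N γ (Finset.mem_sdiff.mp hγ).2)
          ((memG (N+1) γ).mp (Finset.mem_sdiff.mp hγ).1)
      have hsd : ∑ γ ∈ G (N+2) \ G (N+1), g γ = A (N+1) - A N :=
        Finset.sum_sdiff_eq_sub hsub
      have hconst : ∑ γ ∈ G (N+2) \ G (N+1), g γ
          = ((G (N+2) \ G (N+1)).card : ℝ) * p (N+2) := by
        rw [Finset.sum_congr rfl hval, Finset.sum_const, nsmul_eq_mul]
      have hcast : ((G (N+2) \ G (N+1)).card : ℝ)
          = ((G (N+2)).card : ℝ) - ((G (N+1)).card : ℝ) := by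
        rw [Finset.card_sdiff_of_subset hsub, Nat.cast_sub (Finset.card_le_card hsub)]
      have key : A (N+1) = A N
          + p (N+2) * (((G (N+2)).card : ℝ) - ((G (N+1)).card : ℝ)) := by
        rw [← hcast]; linarith
      rw [Finset.sum_range_succ, ih, key]
      ring
  -- conclude
  have hterm0 : ∀ i : ℕ, 0 ≤ (p (i+1) - p (i+2)) * ((G (i+1)).card : ℝ) :=
    fun i => mul_nonneg (by linarith [hdec i]) (Nat.cast_nonneg _)
  have hS0 : 0 ≤ S := tsum_nonneg hg0
  have hbdd : ∀ N : ℕ,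
      ∑ i ∈ Finset.range N, (p (i+1) - p (i+2)) * ((G (i+1)).card : ℝ) ≤ S := by
    intro N
    cases N with
    | zero => simpa using hS0
    | succ N =>
      rw [hP N]
      have h1 : 0 ≤ p (N+2) * ((G (N+1)).card : ℝ) :=
        mul_nonneg (hpos (N+1)).le (Nat.cast_nonneg _)
      linarith [hAle N]
  have hsummable : Summable
      (fun i : ℕ => (p (i+1) - p (i+2)) * ((G (i+1)).card : ℝ)) :=
    summable_of_sum_range_le hterm0 hbdd
  rw [hsummable.hasSum_iff_tendsto_nat]
  have htend1 : Tendsto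
      (fun N : ℕ => ∑ i ∈ Finset.range (N+1),
        (p (i+1) - p (i+2)) * ((G (i+1)).card : ℝ)) atTop (𝓝 S) := by
    have h := hAtend.sub hB
    rw [sub_zero] at h
    exact Tendsto.congr (fun N => (hP N).symm) h
  exact (tendsto_add_atTop_iff_nat 1).mp htend1
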